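/- Let A' ⊆ E ∪ {a, γ} and A = A' \ {a, γ}, and suppose A is a flat of M (i.e., cl(A) = A). Then A' is a flat of M_X^e (i.e., cl'(A') = A') provided one of the following conditions holds: (1) A' = A, A ∪ {e} contains no OX-circuit of M, and F(A) = ∅; (2) A' = A and cl(A) contains no OX-circuit of M; (3) A' = A ∪ {a} and e ∉ cl(A); (4) A' = A ∪ {γ}, e ∉ cl(A), cl(A) contains an OX-circuit of M but A contains no OX-circuit of M, F(A) = ∅, and T(A) = ∅; (5) A' = A ∪ {γ}, cl(A) contains no OX-circuit of M, e ∉ cl(A), and T(A) = ∅; (6) A' = A ∪ {a, γ} and e ∈ A. -/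

import Mathlib

open Set

namespace ESSplit

variable {α : Type*}

/-- A circuit of a matroid: a minimal dependent set. -/
def IsCircuit (M : Matroid α) (C : Set α) : Prop :=
  M.Dep C ∧ ∀ D, D ⊂ C → M.Indep D

/-- A binary matroid: one representable over GF(2). -/
def IsBinary (M : Matroid α) : Prop :=
  ∃ (n : ℕ) (φ : α → (Fin n → ZMod 2)),
    ∀ I, I ⊆ M.E → (M.Indep I ↔ LinearIndependent (ZMod 2) (fun x : I => φ x.1))

/-- An OX-circuit: a circuit meeting `X` in an odd number of elements. -/
def IsOX (M : Matroid α) (X C : Set α) : Prop :=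
  IsCircuit M C ∧ Odd (C ∩ X).ncard

/-- An EX-circuit: a circuit meeting `X` in an even number of elements. -/
def IsEX (M : Matroid α) (X C : Set α) : Prop :=
  IsCircuit M C ∧ Even (C ∩ X).ncard

/-- `D` is a union of two disjoint OX-circuits containing no EX-circuit. -/
def OXUnion (M : Matroid α) (X D : Set α) : Prop :=
  ∃ C₁ C₂, IsOX M X C₁ ∧ IsOX M X C₂ ∧ Disjoint C₁ C₂ ∧ D = C₁ ∪ C₂ ∧
    ¬ ∃ C₀, IsEX M X C₀ ∧ C₀ ⊆ D

/-- The description of the circuits of the es-splitting matroid `M_X^e`. -/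
def ESCircuit (M : Matroid α) (X : Set α) (e a γ : α) (C : Set α) : Prop :=
  C = {e, a, γ} ∨
  IsEX M X C ∨
  (OXUnion M X C ∧ ∀ D, OXUnion M X D → D ⊆ C → D = C) ∨
  (∃ C₀, IsOX M X C₀ ∧ C = C₀ ∪ {a}) ∨
  (∃ C₀, IsOX M X C₀ ∧ e ∉ C₀ ∧ C = C₀ ∪ {e, γ}) ∨
  (∃ C₀, IsOX M X C₀ ∧ e ∈ C₀ ∧ C = (C₀ \ {e}) ∪ {γ}) ∨
  (∃ C₀, IsCircuit M C₀ ∧ e ∈ C₀ ∧ Odd (((C₀ \ {e}) ∩ X).ncard) ∧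
      C = (C₀ \ {e}) ∪ {a, γ})

/-- `M'` is the es-splitting matroid `M_X^e` of `M` (with new elements `a`, `γ`):
it has ground set `M.E ∪ {a, γ}` and its circuits are exactly as described. -/
def IsESSplit (M M' : Matroid α) (X : Set α) (e a γ : α) : Prop :=
  M'.E = M.E ∪ {a, γ} ∧ ∀ C, IsCircuit M' C ↔ ESCircuit M X e a γ C

/-- The set `T(A)`. -/
def T (M : Matroid α) (X : Set α) (e : α) (A : Set α) : Set α :=
  {x | x ∈ M.E \ A ∧ x ≠ e ∧ ∃ C, IsOX M X C ∧ x ∈ C ∧ e ∈ C ∧ C ⊆ A ∪ {e, x}}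

/-- The set `F(A)`. -/
def F (M : Matroid α) (X A : Set α) : Set α :=
  {x | x ∈ M.closure A \ A ∧ ∃ C, IsOX M X C ∧ x ∈ C ∧ C ⊆ M.closure A}

/-- The rank of a set `A` in a (finite) matroid: the maximum size of an
independent subset of `A`. -/
noncomputable def rk (M : Matroid α) (A : Set α) : ℕ :=
  sSup {n | ∃ I, M.Indep I ∧ I ⊆ A ∧ I.ncard = n}

end ESSplit

open ESSplit

section Aux

open Set

namespace ESSplit

variable {α : Type*} {M : Matroid α}

lemma IsCircuit.subsetGround {C : Set α} (h : IsCircuit M C) : C ⊆ M.E :=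
  h.1.subset_ground

lemma IsCircuit.mem_closure_diff {C : Set α} (h : IsCircuit M C) {x : α} (hx : x ∈ C) :
    x ∈ M.closure (C \ {x}) := by
  have hI : M.Indep (C \ {x}) := h.2 _ (Set.sdiff_singleton_ssubset.mpr hx)
  rw [hI.mem_closure_iff_of_notMem (by simp), Set.insert_diff_singleton,
    Set.insert_eq_of_mem hx]
  exact h.1

lemma exists_circuit_subset (hfin : M.E.Finite) {S : Set α} (hS : M.Dep S) :
    ∃ C, C ⊆ S ∧ IsCircuit M C := by
  set P := {n | ∃ D, D ⊆ S ∧ M.Dep D ∧ D.ncard = n} with hP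
  have hne : P.Nonempty := ⟨S.ncard, S, Set.Subset.rfl, hS, rfl⟩
  obtain ⟨D, hDS, hDdep, hDcard⟩ := Nat.sInf_mem hne
  refine ⟨D, hDS, hDdep, fun D' hD' => ?_⟩
  by_contra hind
  have hD'dep : M.Dep D' := ⟨hind, hD'.subset.trans hDdep.subset_ground⟩
  have hmem : D'.ncard ∈ P := ⟨D', hD'.subset.trans hDS, hD'dep, rfl⟩
  have hlt : D'.ncard < D.ncard :=
    Set.ncard_lt_ncard hD' (hfin.subset hDdep.subset_ground)
  have := Nat.sInf_le hmem
  omega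

lemma exists_circuit_of_mem_closure (hfin : M.E.Finite) {B : Set α} (hBE : B ⊆ M.E)
    {x : α} (hx : x ∈ M.closure B) (hxB : x ∉ B) :
    ∃ C, IsCircuit M C ∧ x ∈ C ∧ C ⊆ insert x B := by
  obtain ⟨I, hI⟩ := M.exists_isBasis B hBE
  have hxcl : x ∈ M.closure I := by rw [hI.closure_eq_closure]; exact hx
  have hxI : x ∉ I := fun h => hxB (hI.subset h)
  have hdep : M.Dep (insert x I) := hI.indep.insert_dep_iff.mpr ⟨hxcl, hxI⟩
  obtain ⟨C, hCs, hC⟩ := exists_circuit_subset hfin hdep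
  refine ⟨C, hC, ?_, hCs.trans (insert_subset_insert hI.subset)⟩
  by_contra hxC
  exact hC.1.not_indep (hI.indep.subset fun y hy =>
    ((hCs hy).resolve_left (by rintro rfl; exact hxC hy)))

end ESSplit

end Aux
theorem flats_es_splitting
    {α : Type*} (M M' : Matroid α) (X : Set α) (e a γ : α)
    (hfin : M.E.Finite) (hbin : IsBinary M)
    (hXE : X ⊆ M.E) (heX : e ∈ X) (haE : a ∉ M.E) (hγE : γ ∉ M.E) (haγ : a ≠ γ)
    (hsplit : IsESSplit M M' X e a γ)
    (A' A : Set α) (hA'sub : A' ⊆ M.E ∪ {a, γ}) (hA : A = A' \ {a, γ})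
    (hflat : M.closure A = A)
    (hcase :
      (A' = A ∧ (¬ ∃ C, IsOX M X C ∧ C ⊆ A ∪ {e}) ∧ F M X A = ∅) ∨
      (A' = A ∧ ¬ ∃ C, IsOX M X C ∧ C ⊆ M.closure A) ∨
      (A' = A ∪ {a} ∧ e ∉ M.closure A) ∨
      (A' = A ∪ {γ} ∧ e ∉ M.closure A ∧ (∃ C, IsOX M X C ∧ C ⊆ M.closure A) ∧
        (¬ ∃ C, IsOX M X C ∧ C ⊆ A) ∧ F M X A = ∅ ∧ T M X e A = ∅) ∨
      (A' = A ∪ {γ} ∧ (¬ ∃ C, IsOX M X C ∧ C ⊆ M.closure A) ∧ e ∉ M.closure A ∧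
        T M X e A = ∅) ∨
      (A' = A ∪ {a, γ} ∧ e ∈ A)) :
    M'.closure A' = A' := by
  obtain ⟨hE', hcirc⟩ := hsplit
  have heE : e ∈ M.E := hXE heX
  have hAE : A ⊆ M.E := by rw [← hflat]; exact M.closure_subset_ground A
  have hAA' : A ⊆ A' := by rw [hA]; exact diff_subset
  have hAcl : A ⊆ M.closure A := hflat.symm.subset
  have hγA : γ ∉ A := fun h => hγE (hAE h)
  have haA : a ∉ A := fun h => haE (hAE h)
  have hmemA : ∀ {y : α}, y ∈ M.E → y ∈ A' → y ∈ A := by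
    intro y hyE hyA'
    rw [hA]
    refine ⟨hyA', ?_⟩
    rintro (rfl | rfl)
    · exact haE hyE
    · exact hγE hyE
  have hE'fin : M'.E.Finite := by
    rw [hE']; exact hfin.union ((Set.finite_singleton γ).insert a)
  have hA'E : A' ⊆ M'.E := by rw [hE']; exact hA'sub
  apply subset_antisymm _ (M'.subset_closure A' hA'E)
  intro x hx
  by_contra hxA'
  obtain ⟨C, hC, hxC, hCsub⟩ := exists_circuit_of_mem_closure hE'fin hA'E hx hxA'
  have hES : ESCircuit M X e a γ C := (hcirc C).mp hC
  have hxA : x ∉ A := fun h => hxA' (hAA' h)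
  have hmem' : ∀ {y : α}, y ∈ M.E → y ∈ insert x A' → y ≠ x → y ∈ A := by
    intro y hyE hy hne
    rcases hy with rfl | hy
    · exact absurd rfl hne
    · exact hmemA hyE hy
  have hMEsub : ∀ {S : Set α}, S ⊆ M.E → S ⊆ insert x A' → S ⊆ insert x A := by
    intro S h1 h2 y hy
    by_cases hyx : y = x
    · exact hyx ▸ Set.mem_insert _ _
    · exact Set.mem_insert_of_mem _ (hmem' (h1 hy) (h2 hy) hyx)
  have noA : ∀ C₀ : Set α, IsCircuit M C₀ → x ∈ C₀ → C₀ ⊆ insert x A → False := by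
    intro C₀ hc hxc hsub
    have hcl : x ∈ M.closure A := by
      have h1 := hc.mem_closure_diff hxc
      have h2 : C₀ \ {x} ⊆ A := by
        intro y hy
        rcases hsub hy.1 with rfl | h
        · exact absurd (Set.mem_singleton _) hy.2
        · exact h
      exact (M.closure_subset_closure h2) h1
    rw [hflat] at hcl
    exact hxA hcl
  have eclA : ∀ C₀ : Set α, IsCircuit M C₀ → e ∈ C₀ → C₀ \ {e} ⊆ A → e ∈ A := by
    intro C₀ hc hec hsub
    have hcl := (M.closure_subset_closure hsub) (hc.mem_closure_diff hec)
    rwa [hflat] at hcl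
  rcases hES with rfl | hEX |
      ⟨⟨C₁, C₂, hO1, hO2, hdis, rfl, hnoEX⟩, hmin⟩ |
      ⟨C₀, hO, rfl⟩ | ⟨C₀, hO, heC₀, rfl⟩ | ⟨C₀, hO, heC₀, rfl⟩ |
      ⟨C₀, hcir, heC₀, hodd, rfl⟩
  · -- C = {e, a, γ}
    have hain : a ∈ insert x A' := hCsub (by simp)
    have hγin : γ ∈ insert x A' := hCsub (by simp)
    have hein : e ∈ insert x A' := hCsub (by simp)
    rcases hcase with ⟨rfl, hno, hF⟩ | ⟨rfl, hno⟩ | ⟨rfl, he⟩ |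
        ⟨rfl, he, hex, hnoOX, hF, hT⟩ | ⟨rfl, hno, he, hT⟩ | ⟨rfl, heA⟩
    · rcases hain with h1 | h1
      · rcases hγin with h2 | h2
        · exact haγ (h1.trans h2.symm)
        · exact hγA h2
      · exact haA h1
    · rcases hain with h1 | h1
      · rcases hγin with h2 | h2
        · exact haγ (h1.trans h2.symm)
        · exact hγA h2
      · exact haA h1
    · have hγx : γ = x := by
        rcases hγin with h | h
        · exact h
        · rcases h with h | h
          · exact absurd h hγA
          · exact absurd h.symm haγ
      have heA : e ∈ A := by
        rcases hein with h | h
        · exact absurd (by rw [hγx, ← h]; exact heE : γ ∈ M.E) hγE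
        · rcases h with h | h
          · exact h
          · exact absurd h (fun hh => haE (hh ▸ heE))
      exact he (hAcl heA)
    · have hax : a = x := by
        rcases hain with h | h
        · exact h
        · rcases h with h | h
          · exact absurd h haA
          · exact absurd h haγ
      have heA : e ∈ A := by
        rcases hein with h | h
        · exact absurd (by rw [hax, ← h]; exact heE : a ∈ M.E) haE
        · rcases h with h | h
          · exact h
          · exact absurd h (fun hh => hγE (hh ▸ heE))
      exact he (hAcl heA)
    · have hax : a = x := by
        rcases hain with h | h
        · exact h
        · rcases h with h | h
          · exact absurd h haA
          · exact absurd h haγ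
      have heA : e ∈ A := by
        rcases hein with h | h
        · exact absurd (by rw [hax, ← h]; exact heE : a ∈ M.E) haE
        · rcases h with h | h
          · exact h
          · exact absurd h (fun hh => hγE (hh ▸ heE))
      exact he (hAcl heA)
    · rcases hxC with rfl | hxag
      · exact hxA' (Set.mem_union_left _ heA)
      · rcases hxag with rfl | rfl
        · exact hxA' (Set.mem_union_right _ (by simp))
        · exact hxA' (Set.mem_union_right _ (by simp))
  · -- EX-circuit
    exact noA C hEX.1 hxC (hMEsub hEX.1.subsetGround hCsub)
  · -- OX union
    rcases hxC with h | h
    · exact noA C₁ hO1.1 h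
        (hMEsub hO1.1.subsetGround (Set.subset_union_left.trans hCsub))
    · exact noA C₂ hO2.1 h
        (hMEsub hO2.1.subsetGround (Set.subset_union_right.trans hCsub))
  · -- C = C₀ ∪ {a}
    have hC₀E := hO.1.subsetGround
    by_cases hxa : x = a
    · subst hxa
      have hC₀A : C₀ ⊆ A := fun y hy =>
        hmem' (hC₀E hy) (hCsub (Set.mem_union_left _ hy))
          (fun hh => haE (hh ▸ hC₀E hy))
      rcases hcase with ⟨rfl, hno, hF⟩ | ⟨rfl, hno⟩ | ⟨rfl, he⟩ |
          ⟨rfl, he, hex, hnoOX, hF, hT⟩ | ⟨rfl, hno, he, hT⟩ | ⟨rfl, heA⟩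
      · exact hno ⟨C₀, hO, hC₀A.trans Set.subset_union_left⟩
      · exact hno ⟨C₀, hO, hC₀A.trans hAcl⟩
      · exact hxA' (Set.mem_union_right _ rfl)
      · exact hnoOX ⟨C₀, hO, hC₀A⟩
      · exact hno ⟨C₀, hO, hC₀A.trans hAcl⟩
      · exact hxA' (Set.mem_union_right _ (by simp))
    · have hxC₀ : x ∈ C₀ := by
        rcases hxC with h | h
        · exact h
        · exact absurd h hxa
      exact noA C₀ hO.1 hxC₀
        (hMEsub hC₀E (Set.subset_union_left.trans hCsub))
  · -- C = C₀ ∪ {e, γ}, e ∉ C₀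
    have hC₀E := hO.1.subsetGround
    by_cases hxγ : x = γ
    · subst hxγ
      have hC₀A : C₀ ⊆ A := fun y hy =>
        hmem' (hC₀E hy) (hCsub (Set.mem_union_left _ hy))
          (fun hh => hγE (hh ▸ hC₀E hy))
      have heA : e ∈ A :=
        hmem' heE (hCsub (Set.mem_union_right _ (by simp)))
          (fun hh => hγE (hh ▸ heE))
      rcases hcase with ⟨rfl, hno, hF⟩ | ⟨rfl, hno⟩ | ⟨rfl, he⟩ |
          ⟨rfl, he, hex, hnoOX, hF, hT⟩ | ⟨rfl, hno, he, hT⟩ | ⟨rfl, heA'⟩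
      · exact hno ⟨C₀, hO, hC₀A.trans Set.subset_union_left⟩
      · exact hno ⟨C₀, hO, hC₀A.trans hAcl⟩
      · exact he (hAcl heA)
      · exact he (hAcl heA)
      · exact he (hAcl heA)
      · exact hxA' (Set.mem_union_right _ (by simp))
    · have hγin : γ ∈ insert x A' :=
        hCsub (Set.mem_union_right _ (by simp))
      have hγA' : γ ∈ A' := by
        rcases hγin with h | h
        · exact absurd h.symm hxγ
        · exact h
      rcases hcase with ⟨rfl, hno, hF⟩ | ⟨rfl, hno⟩ | ⟨rfl, he⟩ |
          ⟨rfl, he, hex, hnoOX, hF, hT⟩ | ⟨rfl, hno, he, hT⟩ | ⟨rfl, heA⟩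
      · exact hγA hγA'
      · exact hγA hγA'
      · rcases hγA' with h | h
        · exact hγA h
        · exact haγ h.symm
      · by_cases hxe : x = e
        · subst hxe
          have hC₀A : C₀ ⊆ A := fun y hy =>
            hmem' (hC₀E hy) (hCsub (Set.mem_union_left _ hy))
              (fun hh => heC₀ (hh ▸ hy))
          exact hnoOX ⟨C₀, hO, hC₀A⟩
        · have heA : e ∈ A :=
            hmem' heE (hCsub (Set.mem_union_right _ (by simp)))
              (fun hh => hxe hh.symm)
          exact he (hAcl heA)
      · by_cases hxe : x = e
        · subst hxe
          have hC₀A : C₀ ⊆ A := fun y hy =>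
            hmem' (hC₀E hy) (hCsub (Set.mem_union_left _ hy))
              (fun hh => heC₀ (hh ▸ hy))
          exact hno ⟨C₀, hO, hC₀A.trans hAcl⟩
        · have heA : e ∈ A :=
            hmem' heE (hCsub (Set.mem_union_right _ (by simp)))
              (fun hh => hxe hh.symm)
          exact he (hAcl heA)
      · by_cases hxe : x = e
        · subst hxe
          exact hxA' (Set.mem_union_left _ heA)
        · have hxC₀ : x ∈ C₀ := by
            rcases hxC with h | h
            · exact h
            · rcases h with h | h
              · exact absurd h hxe
              · exact absurd h hxγ
          exact noA C₀ hO.1 hxC₀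
            (hMEsub hC₀E (Set.subset_union_left.trans hCsub))
  · -- C = (C₀ \ {e}) ∪ {γ}, e ∈ C₀
    have hC₀E := hO.1.subsetGround
    by_cases hxγ : x = γ
    · subst hxγ
      have hdA : C₀ \ {e} ⊆ A := fun y hy =>
        hmem' (hC₀E hy.1) (hCsub (Set.mem_union_left _ hy))
          (fun hh => hγE (hh ▸ hC₀E hy.1))
      have heA : e ∈ A := eclA C₀ hO.1 heC₀ hdA
      have hC₀A : C₀ ⊆ A := by
        intro y hy
        by_cases hye : y = e
        · exact hye ▸ heA
        · exact hdA ⟨hy, by simpa using hye⟩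
      rcases hcase with ⟨rfl, hno, hF⟩ | ⟨rfl, hno⟩ | ⟨rfl, he⟩ |
          ⟨rfl, he, hex, hnoOX, hF, hT⟩ | ⟨rfl, hno, he, hT⟩ | ⟨rfl, heA'⟩
      · exact hno ⟨C₀, hO, hC₀A.trans Set.subset_union_left⟩
      · exact hno ⟨C₀, hO, hC₀A.trans hAcl⟩
      · exact he (hAcl heA)
      · exact he (hAcl heA)
      · exact he (hAcl heA)
      · exact hxA' (Set.mem_union_right _ (by simp))
    · have hγA' : γ ∈ A' := by
        have hγin : γ ∈ insert x A' := hCsub (Set.mem_union_right _ rfl)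
        rcases hγin with h | h
        · exact absurd h.symm hxγ
        · exact h
      have hxd : x ∈ C₀ \ {e} := by
        rcases hxC with h | h
        · exact h
        · exact absurd h hxγ
      have hxe : x ≠ e := by simpa using hxd.2
      have hdsub : C₀ \ {e} ⊆ insert x A :=
        hMEsub (fun y hy => hC₀E hy.1) (Set.subset_union_left.trans hCsub)
      have hC₀sub : C₀ ⊆ A ∪ {e, x} := by
        intro y hy
        by_cases hye : y = e
        · exact Set.mem_union_right _ (by simp [hye])
        · rcases hdsub ⟨hy, by simpa using hye⟩ with rfl | h
          · exact Set.mem_union_right _ (by simp)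
          · exact Set.mem_union_left _ h
      rcases hcase with ⟨rfl, hno, hF⟩ | ⟨rfl, hno⟩ | ⟨rfl, he⟩ |
          ⟨rfl, he, hex, hnoOX, hF, hT⟩ | ⟨rfl, hno, he, hT⟩ | ⟨rfl, heA⟩
      · exact hγA hγA'
      · exact hγA hγA'
      · rcases hγA' with h | h
        · exact hγA h
        · exact haγ h.symm
      · have hxT : x ∈ T M X e A :=
          ⟨⟨hC₀E hxd.1, hxA⟩, hxe, C₀, hO, hxd.1, heC₀, hC₀sub⟩
        rw [hT] at hxT
        exact hxT
      · have hxT : x ∈ T M X e A :=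
          ⟨⟨hC₀E hxd.1, hxA⟩, hxe, C₀, hO, hxd.1, heC₀, hC₀sub⟩
        rw [hT] at hxT
        exact hxT
      · have hC₀i : C₀ ⊆ insert x A := by
          intro y hy
          by_cases hye : y = e
          · exact Set.mem_insert_of_mem _ (hye ▸ heA)
          · exact hdsub ⟨hy, by simpa using hye⟩
        exact noA C₀ hO.1 hxd.1 hC₀i
  · -- C = (C₀ \ {e}) ∪ {a, γ}
    have hC₀E := hcir.subsetGround
    have hain : a ∈ insert x A' := hCsub (Set.mem_union_right _ (by simp))
    have hγin : γ ∈ insert x A' := hCsub (Set.mem_union_right _ (by simp))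
    rcases hcase with ⟨rfl, hno, hF⟩ | ⟨rfl, hno⟩ | ⟨rfl, he⟩ |
        ⟨rfl, he, hex, hnoOX, hF, hT⟩ | ⟨rfl, hno, he, hT⟩ | ⟨rfl, heA⟩
    · rcases hain with h1 | h1
      · rcases hγin with h2 | h2
        · exact haγ (h1.trans h2.symm)
        · exact hγA h2
      · exact haA h1
    · rcases hain with h1 | h1
      · rcases hγin with h2 | h2
        · exact haγ (h1.trans h2.symm)
        · exact hγA h2
      · exact haA h1
    · have hγx : γ = x := by
        rcases hγin with h | h
        · exact h
        · rcases h with h | h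
          · exact absurd h hγA
          · exact absurd h.symm haγ
      have hdA : C₀ \ {e} ⊆ A := by
        intro y hy
        have hyE := hC₀E hy.1
        have hyin := hCsub (Set.mem_union_left _ hy)
        rcases hyin with h | h
        · exact absurd (by rw [hγx, ← h]; exact hyE : γ ∈ M.E) hγE
        · rcases h with h | h
          · exact h
          · exact absurd h (fun hh => haE (hh ▸ hyE))
      exact he (hAcl (eclA C₀ hcir heC₀ hdA))
    · have hax : a = x := by
        rcases hain with h | h
        · exact h
        · rcases h with h | h
          · exact absurd h haA
          · exact absurd h haγ
      have hdA : C₀ \ {e} ⊆ A := by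
        intro y hy
        have hyE := hC₀E hy.1
        have hyin := hCsub (Set.mem_union_left _ hy)
        rcases hyin with h | h
        · exact absurd (by rw [hax, ← h]; exact hyE : a ∈ M.E) haE
        · rcases h with h | h
          · exact h
          · exact absurd h (fun hh => hγE (hh ▸ hyE))
      exact he (hAcl (eclA C₀ hcir heC₀ hdA))
    · have hax : a = x := by
        rcases hain with h | h
        · exact h
        · rcases h with h | h
          · exact absurd h haA
          · exact absurd h haγ
      have hdA : C₀ \ {e} ⊆ A := by
        intro y hy
        have hyE := hC₀E hy.1
        have hyin := hCsub (Set.mem_union_left _ hy)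
        rcases hyin with h | h
        · exact absurd (by rw [hax, ← h]; exact hyE : a ∈ M.E) haE
        · rcases h with h | h
          · exact h
          · exact absurd h (fun hh => hγE (hh ▸ hyE))
      exact he (hAcl (eclA C₀ hcir heC₀ hdA))
    · have hxd : x ∈ C₀ \ {e} := by
        rcases hxC with h | h
        · exact h
        · rcases h with h | h
          · exact absurd (Set.mem_union_right A (by simp : a ∈ ({a, γ} : Set α)))
              (h ▸ hxA')
          · exact absurd (Set.mem_union_right A (by simp : γ ∈ ({a, γ} : Set α)))
              (h ▸ hxA')
      have hdsub : C₀ \ {e} ⊆ insert x A :=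
        hMEsub (fun y hy => hC₀E hy.1) (Set.subset_union_left.trans hCsub)
      have hC₀i : C₀ ⊆ insert x A := by
        intro y hy
        by_cases hye : y = e
        · exact Set.mem_insert_of_mem _ (hye ▸ heA)
        · exact hdsub ⟨hy, by simpa using hye⟩
      exact noA C₀ hcir hxd.1 hC₀i
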